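/- arXiv:1505.06017 — 4 statements merged into one kernel-verified Lean document; each statement's English description precedes it below -/
import Mathlib

section
/- Let d ≥ 1, let Ω ⊆ ℝ^d be open, let r, r' > 1 be conjugate exponents, let ν, h₀ > 0, λ ∈ ℝ, and let f : Ω × ℝ → ℝ. Let u : Ω → ℝ be C², let m : Ω → ℝ be C¹ with m(x) > 0 for all x ∈ Ω, and assume that for every x ∈ Ω: (HJB) -ν Δu(x) + (h₀/r') |∇u(x)|^{r'} + λ = f(x, m(x)), and (crucial equality) ν ∇m(x) + h₀ m(x) |∇u(x)|^{r'-2} ∇u(x) = 0. Define φ := m^{1/r} and μ := ν (ν r / h₀)^{r-1}. Then φ is C¹ on Ω, the vector field V : x ↦ |∇φ(x)|^{r-2} ∇φ(x) coincides on Ω with x ↦ -(h₀/(ν r))^{r-1} φ(x)^{r-1} ∇u(x) (hence V is C¹), and for every x ∈ Ω one has μ · div V(x) = (f(x, φ(x)^r) - λ) · φ(x)^{r-1}; that is, φ solves the r-Laplace equation -μ Δ_r φ + (f(x, φ^r) - λ) φ^{r-1} = 0 pointwise on Ω. -/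
/-- Divergence of a vector field on `ℝ^d`: `div V = ∑ i ∂ᵢ Vᵢ`. -/
noncomputable def vdiv {d : ℕ} (V : EuclideanSpace ℝ (Fin d) → EuclideanSpace ℝ (Fin d))
    (x : EuclideanSpace ℝ (Fin d)) : ℝ :=
  ∑ i, fderiv ℝ V x (EuclideanSpace.single i 1) i

/-- Laplacian on `ℝ^d`: `Δ f = div (∇ f)`. -/
noncomputable def lap {d : ℕ} (f : EuclideanSpace ℝ (Fin d) → ℝ)
    (x : EuclideanSpace ℝ (Fin d)) : ℝ :=
  vdiv (gradient f) x

open scoped RealInnerProductSpace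

lemma euclid_sum_single {d : ℕ} (v : EuclideanSpace ℝ (Fin d)) :
    ∑ i, v i • EuclideanSpace.single i (1:ℝ) = v := by
  ext j
  have : (∑ i, v i • EuclideanSpace.single i (1:ℝ)) j = ∑ i, (v i • EuclideanSpace.single i (1:ℝ)) j := by
    induction (Finset.univ : Finset (Fin d)) using Finset.induction with
    | empty => simp
    | insert _ _ hni ih => rw [Finset.sum_insert hni, Finset.sum_insert hni, ← ih]; rfl
  rw [this]
  simp [EuclideanSpace.single_apply]

lemma vdiv_smul_fun {d : ℕ} (g : EuclideanSpace ℝ (Fin d) → ℝ)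
    (w : EuclideanSpace ℝ (Fin d) → EuclideanSpace ℝ (Fin d)) (x : EuclideanSpace ℝ (Fin d))
    (hg : DifferentiableAt ℝ g x) (hw : DifferentiableAt ℝ w x) :
    vdiv (fun y => g y • w y) x = fderiv ℝ g x (w x) + g x * vdiv w x := by
  unfold vdiv
  rw [fderiv_fun_smul hg hw]
  simp only [ContinuousLinearMap.add_apply, ContinuousLinearMap.smul_apply,
    ContinuousLinearMap.smulRight_apply, PiLp.add_apply, PiLp.smul_apply, smul_eq_mul]
  rw [Finset.sum_add_distrib]
  rw [Finset.mul_sum]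
  rw [add_comm]
  congr 1
  conv_rhs => rw [← euclid_sum_single (w x)]
  rw [map_sum]
  simp [mul_comm]

lemma hasGradientAt_const_mul_rpow {d : ℕ} (m : EuclideanSpace ℝ (Fin d) → ℝ) (C p : ℝ)
    (x : EuclideanSpace ℝ (Fin d)) (hm : DifferentiableAt ℝ m x) (hx : m x ≠ 0) :
    HasGradientAt (fun y => C * m y ^ p) ((C * (p * m x ^ (p-1))) • gradient m x) x := by
  have h1 : HasFDerivAt m ((InnerProductSpace.toDual ℝ _) (gradient m x)) x :=
    hasGradientAt_iff_hasFDerivAt.mp hm.hasGradientAt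
  have h2 : HasDerivAt (fun t : ℝ => C * t ^ p) (C * (p * m x ^ (p-1))) (m x) :=
    (Real.hasDerivAt_rpow_const (Or.inl hx)).const_mul C
  have h3 := h2.comp_hasFDerivAt x h1
  rw [hasGradientAt_iff_hasFDerivAt]
  convert h3 using 1
  · rfl
  · rfl
  rw [map_smul]

lemma fderiv_apply_of_hasGradientAt {d : ℕ} {g : EuclideanSpace ℝ (Fin d) → ℝ}
    {G x v : EuclideanSpace ℝ (Fin d)} (h : HasGradientAt g G x) :
    fderiv ℝ g x v = ⟪G, v⟫ := by
  rw [(hasGradientAt_iff_hasFDerivAt.mp h).fderiv, InnerProductSpace.toDual_apply_apply]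

lemma rpow_combine {a b t r r' : ℝ} (ha : 0 < a) (hb : 0 < b) (ht : 0 < t)
    (h1 : (r-1)*(r'-1) = 1) :
    ((a * b * t ^ (r'-2)) * t) ^ (r-2) * (a * b * t ^ (r'-2)) = a^(r-1) * b^(r-1) := by
  have ht2 : (0:ℝ) < t ^ (r'-2) := Real.rpow_pos_of_pos ht _
  have hte : t ^ ((r'-2)*(r-2)) * t ^ (r-2) * t ^ (r'-2) = 1 := by
    rw [← Real.rpow_add ht, ← Real.rpow_add ht,
      show (r'-2)*(r-2) + (r-2) + (r'-2) = 0 by linear_combination h1, Real.rpow_zero]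
  have ha2 : a ^ (r-1) = a ^ (r-2) * a := by
    rw [show r-1 = (r-2)+1 by ring, Real.rpow_add_one ha.ne']
  have hb2 : b ^ (r-1) = b ^ (r-2) * b := by
    rw [show r-1 = (r-2)+1 by ring, Real.rpow_add_one hb.ne']
  rw [Real.mul_rpow (by positivity) ht.le, Real.mul_rpow (by positivity) ht2.le,
    Real.mul_rpow ha.le hb.le, ← Real.rpow_mul ht.le, ha2, hb2]
  linear_combination (a^(r-2) * b^(r-2) * a * b) * hte

/-- (Generalized Hopf–Cole transformation, part a), pointwise version.)
Let `d ≥ 1`, `Ω ⊆ ℝ^d` open, `r, r' > 1` conjugate exponents, `ν, h₀ > 0`, `λ ∈ ℝ`,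
`f : Ω × ℝ → ℝ`. Let `u` be `C²`, `m` be `C¹` and positive on `Ω`, satisfying on `Ω` the
HJB equation `-ν Δu + (h₀/r')|∇u|^{r'} + λ = f(x, m)` and the crucial equality
`ν ∇m + h₀ m |∇u|^{r'-2} ∇u = 0`. With `φ := m^{1/r}` and `μ := ν (νr/h₀)^{r-1}`:
`φ` is `C¹` on `Ω`, the field `V = |∇φ|^{r-2} ∇φ` equals `-(h₀/(νr))^{r-1} φ^{r-1} ∇u`
on `Ω` (hence is `C¹` there), and `μ div V = (f(x, φ^r) - λ) φ^{r-1}` on `Ω`,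
i.e. `φ` solves `-μ Δ_r φ + (f(x,φ^r) - λ) φ^{r-1} = 0` pointwise. -/
theorem generalized_hopf_cole_a (d : ℕ) (hd : 1 ≤ d)
    (Ω : Set (EuclideanSpace ℝ (Fin d))) (hΩ : IsOpen Ω)
    (r r' ν h₀ lam : ℝ) (hr : 1 < r) (hr' : 1 < r') (hconj : 1 / r + 1 / r' = 1)
    (hν : 0 < ν) (hh₀ : 0 < h₀)
    (f : EuclideanSpace ℝ (Fin d) → ℝ → ℝ)
    (u m : EuclideanSpace ℝ (Fin d) → ℝ)
    (hu : ContDiffOn ℝ 2 u Ω) (hm : ContDiffOn ℝ 1 m Ω)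
    (hmpos : ∀ x ∈ Ω, 0 < m x)
    (hHJB : ∀ x ∈ Ω,
      -ν * lap u x + (h₀ / r') * ‖gradient u x‖ ^ r' + lam = f x (m x))
    (hcrucial : ∀ x ∈ Ω,
      ν • gradient m x + (h₀ * m x * ‖gradient u x‖ ^ (r' - 2)) • gradient u x = 0) :
    ContDiffOn ℝ 1 (fun x => m x ^ (1 / r)) Ω ∧
    (∀ x ∈ Ω,
      ‖gradient (fun y => m y ^ (1 / r)) x‖ ^ (r - 2) • gradient (fun y => m y ^ (1 / r)) x
        = -(((h₀ / (ν * r)) ^ (r - 1) * (m x ^ (1 / r)) ^ (r - 1)) • gradient u x)) ∧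
    ContDiffOn ℝ 1
      (fun x => ‖gradient (fun y => m y ^ (1 / r)) x‖ ^ (r - 2) •
        gradient (fun y => m y ^ (1 / r)) x) Ω ∧
    (∀ x ∈ Ω,
      (ν * (ν * r / h₀) ^ (r - 1)) *
        vdiv (fun y => ‖gradient (fun z => m z ^ (1 / r)) y‖ ^ (r - 2) •
          gradient (fun z => m z ^ (1 / r)) y) x
        = (f x ((m x ^ (1 / r)) ^ r) - lam) * (m x ^ (1 / r)) ^ (r - 1)) := by
  have hrpos : (0:ℝ) < r := lt_trans one_pos hr
  have hr'pos : (0:ℝ) < r' := lt_trans one_pos hr'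
  have hrne : r ≠ 0 := hrpos.ne'
  have hr'ne : r' ≠ 0 := hr'pos.ne'
  have hrr' : (r - 1) * (r' - 1) = 1 := by
    have h1 : (1/r + 1/r') * (r * r') = 1 * (r * r') := by rw [hconj]
    have h2 : r' + r = r * r' := by field_simp at h1; linarith
    linear_combination -h2
  have hq : (r - 1) / r = 1 / r' := by
    rw [div_eq_div_iff hrne hr'ne]
    linear_combination hrr'
  set c₀ := h₀ / (ν * r) with hc₀def
  have hc₀ : 0 < c₀ := div_pos hh₀ (mul_pos hν hrpos)
  -- pointwise differentiability of m
  have hdm : ∀ x ∈ Ω, DifferentiableAt ℝ m x := fun x hx =>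
    (hm.contDiffAt (hΩ.mem_nhds hx)).differentiableAt one_ne_zero
  -- gradient of m from the crucial equality
  have hgm : ∀ x ∈ Ω, gradient m x
      = ((-(h₀ * m x * ‖gradient u x‖ ^ (r' - 2))) / ν) • gradient u x := by
    intro x hx
    have h2 : ν • gradient m x = -((h₀ * m x * ‖gradient u x‖ ^ (r' - 2)) • gradient u x) :=
      eq_neg_of_add_eq_zero_left (hcrucial x hx)
    calc gradient m x = ν⁻¹ • (ν • gradient m x) := by
          rw [smul_smul, inv_mul_cancel₀ hν.ne', one_smul]
      _ = ((-(h₀ * m x * ‖gradient u x‖ ^ (r' - 2))) / ν) • gradient u x := by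
          rw [h2, smul_neg, smul_smul, ← neg_smul]
          congr 1
          ring
  -- gradient of φ = m^{1/r}
  have hgφ : ∀ x ∈ Ω, HasGradientAt (fun y => m y ^ (1 / r))
      ((-(c₀ * m x ^ (1 / r) * ‖gradient u x‖ ^ (r' - 2))) • gradient u x) x := by
    intro x hx
    have hmx := hmpos x hx
    have h := hasGradientAt_const_mul_rpow m 1 (1/r) x (hdm x hx) hmx.ne'
    simp only [one_mul] at h
    rw [hgm x hx, smul_smul] at h
    have hm1 : m x ^ (1/r - 1) * m x = m x ^ (1/r) := by
      rw [← Real.rpow_add_one hmx.ne']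
      ring_nf
    have hsc : (1/r * m x ^ (1/r - 1)) * ((-(h₀ * m x * ‖gradient u x‖ ^ (r' - 2))) / ν)
        = -(c₀ * m x ^ (1 / r) * ‖gradient u x‖ ^ (r' - 2)) := by
      rw [hc₀def, ← hm1]
      field_simp
    rw [hsc] at h
    exact h
  have hgradφ : ∀ x ∈ Ω, gradient (fun y => m y ^ (1 / r)) x
      = (-(c₀ * m x ^ (1 / r) * ‖gradient u x‖ ^ (r' - 2))) • gradient u x :=
    fun x hx => (hgφ x hx).gradient
  -- Part 1
  have part1 : ContDiffOn ℝ 1 (fun x => m x ^ (1 / r)) Ω :=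
    hm.rpow_const_of_ne (fun x hx => (hmpos x hx).ne')
  -- Part 2
  have part2 : ∀ x ∈ Ω,
      ‖gradient (fun y => m y ^ (1 / r)) x‖ ^ (r - 2) • gradient (fun y => m y ^ (1 / r)) x
        = -((c₀ ^ (r - 1) * (m x ^ (1 / r)) ^ (r - 1)) • gradient u x) := by
    intro x hx
    have hmx := hmpos x hx
    rw [hgradφ x hx]
    by_cases hgu : gradient u x = 0
    · simp [hgu]
    · have ht : 0 < ‖gradient u x‖ := norm_pos_iff.mpr hgu
      have hA : 0 ≤ c₀ * m x ^ (1/r) * ‖gradient u x‖ ^ (r' - 2) :=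
        mul_nonneg (mul_nonneg hc₀.le (Real.rpow_nonneg hmx.le _))
          (Real.rpow_nonneg (norm_nonneg _) _)
      rw [norm_smul, Real.norm_eq_abs, abs_neg, abs_of_nonneg hA, smul_smul, ← neg_smul]
      congr 1
      have hcomb := rpow_combine hc₀ (Real.rpow_pos_of_pos hmx (1/r)) ht hrr'
      linear_combination -hcomb
  -- identity (m^{1/r})^{r-1} = m^{(r-1)/r}
  have hφpow : ∀ x ∈ Ω, (m x ^ (1 / r)) ^ (r - 1) = m x ^ ((r - 1) / r) := by
    intro x hx
    rw [← Real.rpow_mul (hmpos x hx).le]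
    congr 1
    ring
  -- the smooth representative W
  have part2' : ∀ x ∈ Ω,
      ‖gradient (fun z => m z ^ (1 / r)) x‖ ^ (r - 2) • gradient (fun z => m z ^ (1 / r)) x
        = (-(c₀ ^ (r - 1)) * m x ^ ((r - 1) / r)) • gradient u x := by
    intro x hx
    rw [part2 x hx, hφpow x hx, neg_mul, neg_smul]
  -- smoothness of gradient u on Ω
  have hcd_gradu : ContDiffOn ℝ 1 (gradient u) Ω := by
    have h1 : ContDiffOn ℝ 1 (fderiv ℝ u) Ω := hu.fderiv_of_isOpen hΩ (by norm_num)
    have hbl : IsBoundedLinearMap ℝ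
        (fun L : EuclideanSpace ℝ (Fin d) →L[ℝ] ℝ =>
          (InnerProductSpace.toDual ℝ (EuclideanSpace ℝ (Fin d))).symm L) := by
      refine ⟨⟨fun f g => map_add _ f g, fun c f => ?_⟩, 1, one_pos, fun f => by simp⟩
      simp
    exact hbl.contDiff.comp_contDiffOn h1
  have hW : ContDiffOn ℝ 1
      (fun y => (-(c₀ ^ (r - 1)) * m y ^ ((r - 1) / r)) • gradient u y) Ω := by
    exact (contDiffOn_const.mul
      (hm.rpow_const_of_ne (fun x hx => (hmpos x hx).ne'))).smul hcd_gradu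
  have part3 : ContDiffOn ℝ 1
      (fun x => ‖gradient (fun y => m y ^ (1 / r)) x‖ ^ (r - 2) •
        gradient (fun y => m y ^ (1 / r)) x) Ω :=
    hW.congr part2'
  refine ⟨part1, fun x hx => part2 x hx, part3, ?_⟩
  -- Part 4
  intro x hx
  have hmx := hmpos x hx
  have hgg : HasGradientAt (fun y => -(c₀ ^ (r - 1)) * m y ^ ((r - 1) / r))
      ((-(c₀ ^ (r - 1)) * ((r - 1) / r * m x ^ ((r - 1) / r - 1))) • gradient m x) x :=
    hasGradientAt_const_mul_rpow m _ _ x (hdm x hx) hmx.ne'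
  have hdg : DifferentiableAt ℝ (fun y => -(c₀ ^ (r - 1)) * m y ^ ((r - 1) / r)) x :=
    (hasGradientAt_iff_hasFDerivAt.mp hgg).differentiableAt
  have hdgu : DifferentiableAt ℝ (gradient u) x :=
    (hcd_gradu.contDiffAt (hΩ.mem_nhds hx)).differentiableAt one_ne_zero
  have heq : fderiv ℝ (fun y => ‖gradient (fun z => m z ^ (1 / r)) y‖ ^ (r - 2) •
          gradient (fun z => m z ^ (1 / r)) y) x
      = fderiv ℝ (fun y => (-(c₀ ^ (r - 1)) * m y ^ ((r - 1) / r)) • gradient u y) x :=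
    Filter.EventuallyEq.fderiv_eq (Filter.eventuallyEq_of_mem (hΩ.mem_nhds hx) part2')
  have hvdiv : vdiv (fun y => ‖gradient (fun z => m z ^ (1 / r)) y‖ ^ (r - 2) •
          gradient (fun z => m z ^ (1 / r)) y) x
      = vdiv (fun y => (-(c₀ ^ (r - 1)) * m y ^ ((r - 1) / r)) • gradient u y) x := by
    unfold vdiv
    rw [heq]
  rw [hvdiv, vdiv_smul_fun _ _ _ hdg hdgu]
  rw [fderiv_apply_of_hasGradientAt hgg, hgm x hx, smul_smul, real_inner_smul_left,
    real_inner_self_eq_norm_sq]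
  have hlap : vdiv (gradient u) x = lap u x := rfl
  rw [hlap]
  have hmr : (m x ^ (1 / r)) ^ r = m x := by
    rw [← Real.rpow_mul hmx.le, one_div, inv_mul_cancel₀ hrne, Real.rpow_one]
  rw [hmr, ← hHJB x hx, hφpow x hx]
  have hμc : ν * (ν * r / h₀) ^ (r - 1) * c₀ ^ (r - 1) = ν := by
    have h1 : (ν * r / h₀) * c₀ = 1 := by rw [hc₀def]; field_simp
    rw [mul_assoc, ← Real.mul_rpow (le_of_lt (div_pos (mul_pos hν hrpos) hh₀)) hc₀.le, h1,
      Real.one_rpow, mul_one]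
  have hmq : m x ^ ((r - 1) / r - 1) * m x = m x ^ ((r - 1) / r) := by
    rw [← Real.rpow_add_one hmx.ne']
    ring_nf
  have htp : ‖gradient u x‖ ^ (r' - 2) * ‖gradient u x‖ ^ 2 = ‖gradient u x‖ ^ r' := by
    rcases eq_or_lt_of_le (norm_nonneg (gradient u x)) with h | h
    · rw [← h]
      simp [Real.zero_rpow hr'ne]
    · rw [← Real.rpow_natCast ‖gradient u x‖ 2, ← Real.rpow_add h]
      norm_num
  linear_combination (((r-1)/r) * h₀ * m x ^ ((r-1)/r - 1) * m x *
      (‖gradient u x‖ ^ (r' - 2)) * (‖gradient u x‖ ^ 2) / ν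
      - m x ^ ((r-1)/r) * lap u x) * hμc
    + (((r-1)/r) * h₀ * (‖gradient u x‖ ^ (r' - 2)) * (‖gradient u x‖ ^ 2)) * hmq
    + (((r-1)/r) * h₀ * m x ^ ((r-1)/r)) * htp
    + (h₀ * m x ^ ((r-1)/r) * ‖gradient u x‖ ^ r') * hq
    + (m x ^ ((r - 1) / r - 1) * h₀ * m x * ‖gradient u x‖ ^ (r' - 2) * ‖gradient u x‖ ^ 2 *
        (r * r⁻¹ - r⁻¹)) * (mul_inv_cancel₀ hν.ne')
end

section
/- Let d ≥ 1, let Ω ⊆ ℝ^d be open, let r, r' > 1 be conjugate exponents, let ν, h₀ > 0, λ ∈ ℝ, and let f : Ω × ℝ → ℝ. Let φ : Ω → ℝ be C¹ with φ(x) > 0 for all x ∈ Ω, and let u : Ω → ℝ be C². Set μ := ν (ν r / h₀)^{r-1}. Assume that the vector field V : x ↦ |∇φ(x)|^{r-2} ∇φ(x) is C¹ on Ω and that for every x ∈ Ω: -μ · div V(x) + (f(x, φ(x)^r) - λ) φ(x)^{r-1} = 0, and moreover h₀ φ(x) |∇u(x)|^{r'-2} ∇u(x) + ν r ∇φ(x)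 = 0. Define m := φ^r. Then for every x ∈ Ω: ν ∇m(x) + h₀ m(x) |∇u(x)|^{r'-2} ∇u(x) = 0 (so m solves the Kolmogorov equation), and -ν Δu(x) + (h₀/r') |∇u(x)|^{r'} + λ = f(x, m(x)) (so (u, λ) solves the Hamilton-Jacobi-Bellman equation pointwise). -/
open InnerProductSpace

lemma fderiv_apply_single' {d : ℕ} (f : EuclideanSpace ℝ (Fin d) → ℝ)
    (x : EuclideanSpace ℝ (Fin d)) (i : Fin d) :
    fderiv ℝ f x (EuclideanSpace.single i 1) = gradient f x i := by
  have : fderiv ℝ f x (EuclideanSpace.single i 1)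
      = @inner ℝ _ _ (gradient f x) (EuclideanSpace.single i 1) := by
    rw [gradient, ← toDual_apply_apply, (toDual ℝ _).apply_symm_apply]
  rw [this, EuclideanSpace.inner_single_right]
  simp

lemma grad_rpow' {d : ℕ} {φ : EuclideanSpace ℝ (Fin d) → ℝ} {x : EuclideanSpace ℝ (Fin d)}
    (hφ : DifferentiableAt ℝ φ x) (hpos : φ x ≠ 0) (p : ℝ) :
    gradient (fun y => φ y ^ p) x = (p * φ x ^ (p - 1)) • gradient φ x := by
  have h := hφ.hasFDerivAt.rpow_const (p := p) (Or.inl hpos)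
  rw [gradient, gradient, h.fderiv, map_smul]

lemma vdiv_smul' {d : ℕ} {g : EuclideanSpace ℝ (Fin d) → ℝ}
    {w : EuclideanSpace ℝ (Fin d) → EuclideanSpace ℝ (Fin d)} {x : EuclideanSpace ℝ (Fin d)}
    (hg : DifferentiableAt ℝ g x) (hw : DifferentiableAt ℝ w x) :
    vdiv (fun y => g y • w y) x
      = g x * vdiv w x + ∑ i, gradient g x i * w x i := by
  have h : HasFDerivAt (fun y => g y • w y) _ x := (hg.hasFDerivAt.smul hw.hasFDerivAt)
  unfold vdiv
  rw [h.fderiv, Finset.mul_sum, ← Finset.sum_add_distrib]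
  congr 1; ext i
  rw [← fderiv_apply_single']
  simp [PiLp.smul_apply, smul_eq_mul, mul_comm]

lemma sum_sq_norm' {d : ℕ} (v : EuclideanSpace ℝ (Fin d)) :
    ∑ i, v i * v i = ‖v‖ ^ (2:ℕ) := by
  have h := real_inner_self_eq_norm_sq v
  rw [PiLp.inner_apply] at h
  simpa [RCLike.inner_apply, pow_two] using h

lemma grad_diffAt' {d : ℕ} {u : EuclideanSpace ℝ (Fin d) → ℝ}
    {Ω : Set (EuclideanSpace ℝ (Fin d))}
    (hΩ : IsOpen Ω) (hu : ContDiffOn ℝ 2 u Ω) {x : EuclideanSpace ℝ (Fin d)} (hx : x ∈ Ω) :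
    DifferentiableAt ℝ (gradient u) x := by
  have h1 : ContDiffAt ℝ 2 u x := hu.contDiffAt (hΩ.mem_nhds hx)
  have h2 : ContDiffAt ℝ 1 (fderiv ℝ u) x := h1.fderiv_right (by norm_num)
  have h3 : DifferentiableAt ℝ (fderiv ℝ u) x := h2.differentiableAt one_ne_zero
  have : gradient u = fun y => (toDual ℝ (EuclideanSpace ℝ (Fin d))).symm (fderiv ℝ u y) := rfl
  rw [this]
  exact ((toDual ℝ (EuclideanSpace ℝ (Fin d))).symm.toContinuousLinearEquiv.differentiableAt).comp
    x h3

/-- (Generalized Hopf–Cole transformation, part b), pointwise version.)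
Let `d ≥ 1`, `Ω ⊆ ℝ^d` open, `r, r' > 1` conjugate exponents, `ν, h₀ > 0`, `λ ∈ ℝ`,
`f : Ω × ℝ → ℝ`. Let `φ` be `C¹` and positive on `Ω`, `u` be `C²` on `Ω`, and
`μ := ν (νr/h₀)^{r-1}`. Assume `V = |∇φ|^{r-2} ∇φ` is `C¹` on `Ω`, that
`-μ div V + (f(x,φ^r) - λ) φ^{r-1} = 0` on `Ω`, and the coupling relation
`h₀ φ |∇u|^{r'-2} ∇u + ν r ∇φ = 0` on `Ω`. With `m := φ^r`, on `Ω` one has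
`ν ∇m + h₀ m |∇u|^{r'-2} ∇u = 0` (Kolmogorov) and
`-ν Δu + (h₀/r')|∇u|^{r'} + λ = f(x, m)` (HJB, pointwise). -/
theorem generalized_hopf_cole_b (d : ℕ) (hd : 1 ≤ d)
    (Ω : Set (EuclideanSpace ℝ (Fin d))) (hΩ : IsOpen Ω)
    (r r' ν h₀ lam : ℝ) (hr : 1 < r) (hr' : 1 < r') (hconj : 1 / r + 1 / r' = 1)
    (hν : 0 < ν) (hh₀ : 0 < h₀)
    (f : EuclideanSpace ℝ (Fin d) → ℝ → ℝ)
    (φ u : EuclideanSpace ℝ (Fin d) → ℝ)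
    (hφ : ContDiffOn ℝ 1 φ Ω) (hφpos : ∀ x ∈ Ω, 0 < φ x)
    (hu : ContDiffOn ℝ 2 u Ω)
    (hV : ContDiffOn ℝ 1 (fun x => ‖gradient φ x‖ ^ (r - 2) • gradient φ x) Ω)
    (hPDE : ∀ x ∈ Ω,
      -(ν * (ν * r / h₀) ^ (r - 1)) *
          vdiv (fun y => ‖gradient φ y‖ ^ (r - 2) • gradient φ y) x +
        (f x (φ x ^ r) - lam) * φ x ^ (r - 1) = 0)
    (hcoupling : ∀ x ∈ Ω,
      (h₀ * φ x * ‖gradient u x‖ ^ (r' - 2)) • gradient u x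
        + (ν * r) • gradient φ x = 0) :
    (∀ x ∈ Ω,
      ν • gradient (fun y => φ y ^ r) x +
        (h₀ * φ x ^ r * ‖gradient u x‖ ^ (r' - 2)) • gradient u x = 0) ∧
    (∀ x ∈ Ω,
      -ν * lap u x + (h₀ / r') * ‖gradient u x‖ ^ r' + lam = f x (φ x ^ r)) := by
  have hr0 : r ≠ 0 := by linarith
  have hr'0 : r' ≠ 0 := by linarith
  have hconj' : r' + r = r * r' := by
    have h := hconj
    field_simp at h
    linarith
  have hrr' : (r - 1) * (r' - 1) = 1 := by linear_combination -hconj'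
  have hr'r : r' * (r - 1) = r := by linear_combination -hconj'
  have hνr : (0:ℝ) < ν * r := by positivity
  -- the gradient relation derived from the coupling
  have hGrad : ∀ y ∈ Ω, gradient φ y
      = (-(h₀ * φ y / (ν * r)) * ‖gradient u y‖ ^ (r' - 2)) • gradient u y := by
    intro y hy
    have h2 : (ν * r) • gradient φ y
        = -((h₀ * φ y * ‖gradient u y‖ ^ (r' - 2)) • gradient u y) :=
      eq_neg_of_add_eq_zero_right (hcoupling y hy)
    have h3 : gradient φ y = (ν * r)⁻¹ • ((ν * r) • gradient φ y) :=
      (inv_smul_smul₀ hνr.ne' _).symm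
    rw [h3, h2, smul_neg, smul_smul, ← neg_smul]
    congr 1
    field_simp
  constructor
  · -- Kolmogorov
    intro x hx
    have hφd : DifferentiableAt ℝ φ x := (hφ.contDiffAt (hΩ.mem_nhds hx)).differentiableAt one_ne_zero
    have hφx : 0 < φ x := hφpos x hx
    rw [grad_rpow' hφd hφx.ne' r]
    have h2 : (h₀ * φ x * ‖gradient u x‖ ^ (r' - 2)) • gradient u x
        = -((ν * r) • gradient φ x) := eq_neg_of_add_eq_zero_left (hcoupling x hx)
    have hφr : φ x ^ r = φ x ^ (r - 1) * φ x := by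
      rw [← Real.rpow_add_one hφx.ne' (r - 1)]
      norm_num
    have h4 : (h₀ * φ x ^ r * ‖gradient u x‖ ^ (r' - 2)) • gradient u x
        = φ x ^ (r - 1) • ((h₀ * φ x * ‖gradient u x‖ ^ (r' - 2)) • gradient u x) := by
      rw [smul_smul]
      congr 1
      rw [hφr]; ring
    rw [h4, h2]
    module
  · -- HJB
    intro x hx
    have hmem := hΩ.mem_nhds hx
    have hφd : DifferentiableAt ℝ φ x := (hφ.contDiffAt hmem).differentiableAt one_ne_zero
    have hφx : 0 < φ x := hφpos x hx
    set w := gradient u with hwdef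
    set c : ℝ := (h₀ / (ν * r)) ^ (r - 1) with hcdef
    set g : EuclideanSpace ℝ (Fin d) → ℝ := fun y => -(c * φ y ^ (r - 1)) with hgdef
    -- V = g • w on Ω
    have hVeq : ∀ y ∈ Ω, ‖gradient φ y‖ ^ (r - 2) • gradient φ y = g y • w y := by
      intro y hy
      have hG := hGrad y hy
      by_cases hwy : w y = 0
      · rw [hG, hwy]; simp
      · have hwn : 0 < ‖w y‖ := norm_pos_iff.mpr hwy
        have hφy : 0 < φ y := hφpos y hy
        have ha : (0:ℝ) < h₀ * φ y / (ν * r) := by positivity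
        have hnorm : ‖gradient φ y‖ = (h₀ * φ y / (ν * r)) * ‖w y‖ ^ (r' - 1) := by
          rw [hG, norm_smul, Real.norm_eq_abs, abs_mul, abs_neg, abs_of_pos ha,
            abs_of_nonneg (Real.rpow_nonneg (norm_nonneg _) _), mul_assoc]
          congr 1
          rw [← Real.rpow_add_one hwn.ne' (r' - 2), show r' - 2 + 1 = r' - 1 by ring]
        rw [hnorm, hG, smul_smul]
        congr 1
        rw [Real.mul_rpow ha.le (Real.rpow_nonneg (norm_nonneg _) _),
          ← Real.rpow_mul (norm_nonneg _)]
        rw [show (r' - 1) * (r - 2) = 2 - r' by linear_combination hrr']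
        have step : (h₀ * φ y / (ν * r)) ^ (r - 2) * ‖w y‖ ^ (2 - r') *
            (-(h₀ * φ y / (ν * r)) * ‖w y‖ ^ (r' - 2))
            = -(((h₀ * φ y / (ν * r)) ^ (r - 2) * (h₀ * φ y / (ν * r))) *
              (‖w y‖ ^ (2 - r') * ‖w y‖ ^ (r' - 2))) := by ring
        rw [step, ← Real.rpow_add_one ha.ne' (r - 2), ← Real.rpow_add hwn,
          show r - 2 + 1 = r - 1 by ring, show 2 - r' + (r' - 2) = 0 by ring,
          Real.rpow_zero, mul_one]
        show -((h₀ * φ y / (ν * r)) ^ (r - 1)) = -(c * φ y ^ (r - 1))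
        rw [show h₀ * φ y / (ν * r) = (h₀ / (ν * r)) * φ y by ring,
          Real.mul_rpow (by positivity) hφy.le]
    -- differentiability
    have hwd : DifferentiableAt ℝ w x := grad_diffAt' hΩ hu hx
    have hgd : DifferentiableAt ℝ g x :=
      ((hφd.rpow_const (Or.inl hφx.ne')).const_mul c).neg
    have heq : (fun y => ‖gradient φ y‖ ^ (r - 2) • gradient φ y) =ᶠ[nhds x]
        (fun y => g y • w y) := Filter.eventuallyEq_of_mem hmem hVeq
    have hdv : vdiv (fun y => ‖gradient φ y‖ ^ (r - 2) • gradient φ y) x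
        = vdiv (fun y => g y • w y) x := by
      unfold vdiv
      rw [heq.fderiv_eq]
    -- gradient of g
    have hgrad_g : gradient g x = (-(c * ((r - 1) * φ x ^ (r - 2)))) • gradient φ x := by
      have h1 := hφd.hasFDerivAt.rpow_const (p := r - 1) (Or.inl hφx.ne')
      have h2 : HasFDerivAt g (-(c • (((r - 1) * φ x ^ (r - 1 - 1)) • fderiv ℝ φ x))) x :=
        (h1.const_mul c).neg
      rw [gradient, gradient, h2.fderiv, map_neg, map_smul, map_smul, ← neg_smul, smul_smul,
        show r - 1 - 1 = r - 2 by ring, neg_mul]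
    have hGx := hGrad x hx
    have hsum : ∑ i, gradient g x i * w x i
        = (-(c * ((r - 1) * φ x ^ (r - 2)))) *
          (-(h₀ * φ x / (ν * r)) * ‖w x‖ ^ (r' - 2)) * (‖w x‖ ^ (2:ℕ)) := by
      rw [hgrad_g, hGx, ← sum_sq_norm', Finset.mul_sum]
      congr 1; funext i
      simp only [PiLp.smul_apply, smul_eq_mul]
      ring
    have hW : ‖w x‖ ^ (r' - 2) * (‖w x‖ ^ (2:ℕ)) = ‖w x‖ ^ r' := by
      by_cases hwx : w x = 0
      · rw [hwx]
        simp [Real.zero_rpow hr'0]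
      · have hwn : 0 < ‖w x‖ := norm_pos_iff.mpr hwx
        rw [← Real.rpow_natCast ‖w x‖ 2, ← Real.rpow_add hwn]
        norm_num
    have hφ12 : φ x ^ (r - 2) * φ x = φ x ^ (r - 1) := by
      rw [← Real.rpow_add_one hφx.ne' (r - 2), show r - 2 + 1 = r - 1 by ring]
    have hterm2 : (-(c * ((r - 1) * φ x ^ (r - 2)))) *
          (-(h₀ * φ x / (ν * r)) * ‖w x‖ ^ (r' - 2)) * (‖w x‖ ^ (2:ℕ))
        = c * (r - 1) * (h₀ / (ν * r)) * φ x ^ (r - 1) * ‖w x‖ ^ r' := by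
      calc (-(c * ((r - 1) * φ x ^ (r - 2)))) *
          (-(h₀ * φ x / (ν * r)) * ‖w x‖ ^ (r' - 2)) * (‖w x‖ ^ (2:ℕ))
          = c * (r - 1) * (h₀ / (ν * r)) * (φ x ^ (r - 2) * φ x) *
            (‖w x‖ ^ (r' - 2) * (‖w x‖ ^ (2:ℕ))) := by ring
        _ = _ := by rw [hφ12, hW]
    have hμc : (ν * r / h₀) ^ (r - 1) * c = 1 := by
      rw [hcdef, ← Real.mul_rpow (by positivity) (by positivity),
        show ν * r / h₀ * (h₀ / (ν * r)) = 1 by field_simp]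
      exact Real.one_rpow _
    have hP := hPDE x hx
    rw [hdv, vdiv_smul' hgd hwd, hsum, hterm2, hgdef] at hP
    have hP2 : φ x ^ (r - 1) *
        (ν * vdiv w x - (r - 1) * (h₀ / r) * ‖w x‖ ^ r' + (f x (φ x ^ r) - lam)) = 0 := by
      have hiν : ν * ν⁻¹ = 1 := mul_inv_cancel₀ hν.ne'
      linear_combination hP + (-(ν * (φ x ^ (r - 1)) * vdiv w x) +
        ν * (r - 1) * (h₀ / (ν * r)) * (φ x ^ (r - 1)) * (‖w x‖ ^ r')) * hμc +
        ((φ x ^ (r - 1)) * (r - 1) * (‖w x‖ ^ r') * h₀ / r) * hiν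
    have hP3 : ν * vdiv w x - (r - 1) * (h₀ / r) * ‖w x‖ ^ r' + (f x (φ x ^ r) - lam) = 0 := by
      rcases mul_eq_zero.mp hP2 with h | h
      · exact absurd h (Real.rpow_pos_of_pos hφx _).ne'
      · exact h
    have hfrac : (r - 1) * (h₀ / r) = h₀ / r' := by
      field_simp
      linear_combination h₀ * hr'r + (h₀ - 1) * hconj'
    rw [hfrac] at hP3
    show -ν * vdiv w x + (h₀ / r') * ‖w x‖ ^ r' + lam = f x (φ x ^ r)
    linarith [hP3]
end

section
/- Let -∞ < a < b < ∞, let r, r' > 1 be conjugate exponents, let ν, h₀ > 0, λ ∈ ℝ, and f : [a,b] × ℝ → ℝ. Let u : [a,b] → ℝ be C², let m : [a,b] → ℝ be C¹ with m > 0, and set F(x) := ν m'(x) + h₀ |u'(x)|^{r'-2} u'(x) m(x). Assume: (i) -ν u''(x) + (h₀/r') |u'(x)|^{r'} + λ = f(x, m(x)) for all x ∈ [a,b]; (ii) F is differentiable on (a,b) with F'(x) = 0 for all x ∈ (a,b); (iii) the Neumann conditions u'(a) = u'(b) = m'(a) = m'(b) = 0 hold. Define φ := m^{1/r} and μ :=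 ν(νr/h₀)^{r-1}. Then φ is C¹ on [a,b] with φ'(a) = φ'(b) = 0, the function ψ := |φ'|^{r-2} φ' is C¹ on [a,b], and μ ψ'(x) = (f(x, φ(x)^r) - λ) φ(x)^{r-1} for all x ∈ [a,b]. -/
open Real Set Filter

lemma signedPow_bound (p s : ℝ) : ‖|s| ^ (p - 1) * s‖ ≤ |s| ^ p := by
  by_cases hs : s = 0
  · simp [hs, Real.rpow_nonneg]
  · have habs : (0:ℝ) < |s| := abs_pos.2 hs
    rw [norm_mul, norm_eq_abs, norm_eq_abs,
      abs_of_nonneg (Real.rpow_nonneg (abs_nonneg s) _)]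
    rw [show p = (p - 1) + 1 by ring, Real.rpow_add habs, Real.rpow_one]
    ring_nf
    exact le_refl _

lemma signedPow_cont (p : ℝ) (hp : 0 < p) :
    Continuous (fun t : ℝ => |t| ^ (p - 1) * t) := by
  rw [continuous_iff_continuousAt]
  intro t
  by_cases ht : t = 0
  · subst ht
    have key : Tendsto (fun t : ℝ => |t| ^ (p - 1) * t) (nhds 0) (nhds 0) := by
      apply squeeze_zero_norm (fun s => signedPow_bound p s)
      have : Continuous fun t : ℝ => |t| ^ p :=
        continuous_abs.rpow_const fun t => Or.inr hp.le
      simpa [Real.zero_rpow hp.ne'] using this.tendsto 0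
    unfold ContinuousAt
    simpa using key
  · exact (continuous_abs.continuousAt.rpow_const (Or.inl (abs_ne_zero.2 ht))).mul continuousAt_id

lemma signedPow_sq (p t : ℝ) (hp : p ≠ 0) : |t| ^ (p - 2) * t * t = |t| ^ p := by
  by_cases ht : t = 0
  · simp [ht, Real.zero_rpow hp]
  · have habs : (0:ℝ) < |t| := abs_pos.2 ht
    have h2 : t * t = |t| ^ (2:ℝ) := by
      rw [show (2:ℝ) = ((2:ℕ):ℝ) by norm_num, Real.rpow_natCast, sq_abs, sq]
    rw [mul_assoc, h2, ← Real.rpow_add habs]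
    ring_nf

/-- (One-dimensional corollary with Neumann conditions, pointwise form.)
Let `a < b`, `r, r' > 1` conjugate, `ν, h₀ > 0`, `λ ∈ ℝ`, `f : [a,b] × ℝ → ℝ`. Let `u` be
`C²` on `[a,b]` (derivatives `u'`, `u''`, with `u''` continuous) and `m` be `C¹` (derivative
`m'` continuous) and positive, and let `F := ν m' + h₀|u'|^{r'-2} u' m`. Assume the HJB
equation `-ν u'' + (h₀/r')|u'|^{r'} + λ = f(x, m)` on `[a,b]`, that `F` is differentiable
with `F' = 0` on `(a,b)`, and Neumann conditions `u'(a) = u'(b) = m'(a) = m'(b) = 0`.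
With `φ := m^{1/r}`, `μ := ν(νr/h₀)^{r-1}`: `φ` is `C¹` on `[a,b]` with `φ'(a) = φ'(b) = 0`,
`ψ := |φ'|^{r-2}φ'` is `C¹` on `[a,b]`, and `μ ψ' = (f(x,φ^r) - λ)φ^{r-1}` on `[a,b]`. -/
theorem one_dimensional_hopf_cole (a b r r' ν h₀ lam : ℝ) (hab : a < b)
    (hr : 1 < r) (hr' : 1 < r') (hconj : 1 / r + 1 / r' = 1)
    (hν : 0 < ν) (hh₀ : 0 < h₀)
    (f : ℝ → ℝ → ℝ) (u u' u'' m m' : ℝ → ℝ)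
    (hu' : ∀ x ∈ Set.Icc a b, HasDerivWithinAt u (u' x) (Set.Icc a b) x)
    (hu'' : ∀ x ∈ Set.Icc a b, HasDerivWithinAt u' (u'' x) (Set.Icc a b) x)
    (hu''c : ContinuousOn u'' (Set.Icc a b))
    (hm' : ∀ x ∈ Set.Icc a b, HasDerivWithinAt m (m' x) (Set.Icc a b) x)
    (hm'c : ContinuousOn m' (Set.Icc a b))
    (hmpos : ∀ x ∈ Set.Icc a b, 0 < m x)
    (hHJB : ∀ x ∈ Set.Icc a b,
      -ν * u'' x + (h₀ / r') * |u' x| ^ r' + lam = f x (m x))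
    (hF' : ∀ x ∈ Set.Ioo a b,
      HasDerivAt (fun y => ν * m' y + h₀ * |u' y| ^ (r' - 2) * u' y * m y) 0 x)
    (hua : u' a = 0) (hub : u' b = 0) (hma : m' a = 0) (hmb : m' b = 0) :
    ∃ φ' : ℝ → ℝ,
      (∀ x ∈ Set.Icc a b,
        HasDerivWithinAt (fun y => m y ^ (1 / r)) (φ' x) (Set.Icc a b) x) ∧
      ContinuousOn φ' (Set.Icc a b) ∧ φ' a = 0 ∧ φ' b = 0 ∧
      ∃ ψ' : ℝ → ℝ,
        (∀ x ∈ Set.Icc a b,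
          HasDerivWithinAt (fun y => |φ' y| ^ (r - 2) * φ' y) (ψ' x) (Set.Icc a b) x) ∧
        ContinuousOn ψ' (Set.Icc a b) ∧
        ∀ x ∈ Set.Icc a b,
          (ν * (ν * r / h₀) ^ (r - 1)) * ψ' x
            = (f x ((m x ^ (1 / r)) ^ r) - lam) * (m x ^ (1 / r)) ^ (r - 1) := by
  have hr0 : r ≠ 0 := by positivity
  have hr'0 : r' ≠ 0 := by positivity
  have hν0 : ν ≠ 0 := hν.ne'
  have hrr' : r + r' = r * r' := by
    field_simp at hconj; linarith
  have hrinv : (r - 1) / r = 1 / r' := by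
    rw [div_eq_div_iff hr0 hr'0]
    nlinarith [hrr']
  -- continuity of u', m
  have hu'c : ContinuousOn u' (Set.Icc a b) :=
    fun x hx => (hu'' x hx).continuousWithinAt
  have hmc : ContinuousOn m (Set.Icc a b) :=
    fun x hx => (hm' x hx).continuousWithinAt
  have hgc : ContinuousOn (fun y => |u' y| ^ (r' - 2) * u' y) (Set.Icc a b) := by
    have := (signedPow_cont (r' - 1) (by linarith)).comp_continuousOn hu'c
    simpa [Function.comp_def, show r' - 1 - 1 = r' - 2 by ring] using this
  -- Step 1: the flux vanishes identically
  have hF0 : ∀ x ∈ Set.Icc a b,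
      ν * m' x + h₀ * |u' x| ^ (r' - 2) * u' x * m x = 0 := by
    set F : ℝ → ℝ := fun y => ν * m' y + h₀ * |u' y| ^ (r' - 2) * u' y * m y with hFdef
    have hFc : ContinuousOn F (Set.Icc a b) := by
      apply (continuousOn_const.mul hm'c).add
      exact ((continuousOn_const (c := h₀).mul hgc).mul hmc).congr (fun y hy => by simp only [Pi.mul_apply]; ring)
    have hFa : F a = 0 := by simp [hFdef, hma, hua]
    have key : ∀ x ∈ Set.Ioo a b, ∀ y ∈ Set.Ioo a b, x ≤ y → F y = F x := by
      intro x hx y hy hxy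
      have hsub : Set.Icc x y ⊆ Set.Ioo a b := fun t ht =>
        ⟨lt_of_lt_of_le hx.1 ht.1, lt_of_le_of_lt ht.2 hy.2⟩
      have hcont : ContinuousOn F (Set.Icc x y) := fun t ht =>
        (hF' t (hsub ht)).continuousAt.continuousWithinAt
      exact constant_of_has_deriv_right_zero hcont
        (fun t ht => (hF' t (hsub ⟨ht.1, ht.2.le⟩)).hasDerivWithinAt)
        y (right_mem_Icc.2 hxy)
    set c := (a + b) / 2 with hc
    have hcmem : c ∈ Set.Ioo a b := ⟨by simp [hc]; linarith, by simp [hc]; linarith⟩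
    have hIoo : ∀ x ∈ Set.Ioo a b, F x = F c := by
      intro x hx
      rcases le_total x c with h | h
      · exact (key x hx c hcmem h).symm ▸ rfl
      · exact key c hcmem x hx h
    have hlim : ∀ (p : ℝ), p ∈ Set.Icc a b → NeBot (nhdsWithin p (Set.Ioo a b)) → F p = F c := by
      intro p hp hne
      have h1 : Tendsto F (nhdsWithin p (Set.Ioo a b)) (nhds (F p)) :=
        ((hFc p hp).mono Set.Ioo_subset_Icc_self)
      have h2 : Tendsto F (nhdsWithin p (Set.Ioo a b)) (nhds (F c)) := by
        apply tendsto_const_nhds.congr'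
        filter_upwards [self_mem_nhdsWithin] with y hy using (hIoo y hy).symm
      exact tendsto_nhds_unique h1 h2
    have hna : NeBot (nhdsWithin a (Set.Ioo a b)) := by
      rw [nhdsWithin_Ioo_eq_nhdsGT hab]; infer_instance
    have hnb : NeBot (nhdsWithin b (Set.Ioo a b)) := by
      rw [nhdsWithin_Ioo_eq_nhdsLT hab]; infer_instance
    have hFceq : F c = 0 := by
      rw [← hlim a ⟨le_refl a, hab.le⟩ hna, hFa]
    intro x hx
    rcases eq_or_lt_of_le hx.1 with rfl | hax
    · exact hFa
    rcases eq_or_lt_of_le hx.2 with rfl | hxb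
    · exact (hlim x hx hnb).trans hFceq
    · exact (hIoo x ⟨hax, hxb⟩).trans hFceq
  -- m' in terms of u' and m
  have hm'eq : ∀ x ∈ Set.Icc a b,
      m' x = -(h₀ / ν) * (|u' x| ^ (r' - 2) * u' x) * m x := by
    intro x hx
    have h := hF0 x hx
    field_simp
    linarith
  -- Step 2: define and study φ'
  refine ⟨fun x => m' x * (1 / r) * m x ^ (1 / r - 1), ?_, ?_, ?_, ?_, ?_⟩
  · intro x hx
    exact (hm' x hx).rpow_const (Or.inl (hmpos x hx).ne')
  · apply (hm'c.mul continuousOn_const).mul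
    exact hmc.rpow_const (fun x hx => Or.inl (hmpos x hx).ne')
  · simp [hma]
  · simp [hmb]
  -- Step 3: the transformed equation
  set k := h₀ / (ν * r) with hkdef
  have hk : 0 < k := by rw [hkdef]; positivity
  have hφ'eq : ∀ y ∈ Set.Icc a b, m' y * (1 / r) * m y ^ (1 / r - 1)
      = -k * ((|u' y| ^ (r' - 2) * u' y) * m y ^ (1 / r)) := by
    intro y hy
    rw [hm'eq y hy]
    have hm1 : m y * m y ^ (1 / r - 1) = m y ^ (1 / r) := by
      nth_rewrite 1 [← Real.rpow_one (m y)]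
      rw [← Real.rpow_add (hmpos y hy)]
      norm_num
    rw [← hm1, hkdef]
    field_simp
  have hkey : ∀ y ∈ Set.Icc a b,
      |m' y * (1 / r) * m y ^ (1 / r - 1)| ^ (r - 2) * (m' y * (1 / r) * m y ^ (1 / r - 1))
      = -(k ^ (r - 1)) * (u' y * m y ^ ((r - 1) / r)) := by
    intro y hy
    by_cases hu0 : u' y = 0
    · have hφ0 : m' y * (1 / r) * m y ^ (1 / r - 1) = 0 := by
        rw [hφ'eq y hy, hu0]; ring
      rw [hφ0, hu0]; simp
    · have hspos : (0:ℝ) < |u' y| := abs_pos.2 hu0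
      have hP : 0 < m y ^ (1 / r) := Real.rpow_pos_of_pos (hmpos y hy) _
      have hgabs : |(|u' y| ^ (r' - 2) * u' y)| = |u' y| ^ (r' - 1) := by
        rw [abs_mul, abs_of_nonneg (Real.rpow_nonneg (abs_nonneg _) _)]
        rw [show r' - 1 = (r' - 2) + 1 by ring, Real.rpow_add hspos, Real.rpow_one]
      have habs : |m' y * (1 / r) * m y ^ (1 / r - 1)|
          = k * (|u' y| ^ (r' - 1) * m y ^ (1 / r)) := by
        rw [hφ'eq y hy, abs_mul, abs_neg, abs_of_pos hk, abs_mul, abs_of_pos hP, hgabs]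
      rw [habs, hφ'eq y hy]
      rw [Real.mul_rpow hk.le (by positivity), Real.mul_rpow (by positivity) hP.le]
      have e4 : ((|u' y| ^ (r' - 1)) ^ (r - 2)) * (|u' y| ^ (r' - 2) * u' y) = u' y := by
        rw [← Real.rpow_mul hspos.le, ← mul_assoc, ← Real.rpow_add hspos]
        rw [show (r' - 1) * (r - 2) + (r' - 2) = r * r' - r - r' by ring,
          show r * r' - r - r' = 0 by linarith [hrr'], Real.rpow_zero, one_mul]
      have e5 : (m y ^ (1 / r)) ^ (r - 2) * (m y ^ (1 / r)) = m y ^ ((r - 1) / r) := by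
        nth_rewrite 2 [← Real.rpow_one (m y ^ (1 / r))]
        rw [← Real.rpow_add hP, ← Real.rpow_mul (hmpos y hy).le]
        congr 1
        field_simp
        ring
      have e6 : k ^ (r - 2) * k = k ^ (r - 1) := by
        nth_rewrite 2 [← Real.rpow_one k]
        rw [← Real.rpow_add hk]
        congr 1
        ring
      calc k ^ (r - 2) * ((|u' y| ^ (r' - 1)) ^ (r - 2) * (m y ^ (1 / r)) ^ (r - 2))
            * (-k * ((|u' y| ^ (r' - 2) * u' y) * m y ^ (1 / r)))
          = -((k ^ (r - 2) * k) * ((((|u' y| ^ (r' - 1)) ^ (r - 2)) * (|u' y| ^ (r' - 2) * u' y))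
              * ((m y ^ (1 / r)) ^ (r - 2) * (m y ^ (1 / r))))) := by ring
        _ = -(k ^ (r - 1)) * (u' y * m y ^ ((r - 1) / r)) := by rw [e4, e5, e6]; ring
  refine ⟨fun x => -(k ^ (r - 1)) * (u'' x * m x ^ ((r - 1) / r)
      + u' x * (m' x * ((r - 1) / r) * m x ^ ((r - 1) / r - 1))), ?_, ?_, ?_⟩
  · intro x hx
    have h1 : HasDerivWithinAt (fun y => u' y * m y ^ ((r - 1) / r))
        (u'' x * m x ^ ((r - 1) / r)
          + u' x * (m' x * ((r - 1) / r) * m x ^ ((r - 1) / r - 1))) (Set.Icc a b) x :=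
      (hu'' x hx).mul ((hm' x hx).rpow_const (Or.inl (hmpos x hx).ne'))
    exact (h1.const_mul (-(k ^ (r - 1)))).congr (fun y hy => hkey y hy) (hkey x hx)
  · apply continuousOn_const.mul
    apply (hu''c.mul (hmc.rpow_const (fun x hx => Or.inl (hmpos x hx).ne'))).add
    exact hu'c.mul ((hm'c.mul continuousOn_const).mul
      (hmc.rpow_const (fun x hx => Or.inl (hmpos x hx).ne')))
  · intro x hx
    beta_reduce
    have hmx := hmpos x hx
    have hmr : (m x ^ (1 / r)) ^ r = m x := by
      rw [← Real.rpow_mul hmx.le, one_div, inv_mul_cancel₀ hr0, Real.rpow_one]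
    have hmr1 : (m x ^ (1 / r)) ^ (r - 1) = m x ^ ((r - 1) / r) := by
      rw [← Real.rpow_mul hmx.le]
      congr 1
      field_simp
    rw [hmr, hmr1]
    have hμC : (ν * r / h₀) ^ (r - 1) * k ^ (r - 1) = 1 := by
      rw [← Real.mul_rpow (by positivity) hk.le,
        show ν * r / h₀ * k = 1 by rw [hkdef]; field_simp, Real.one_rpow]
    have hmA : m x * m x ^ ((r - 1) / r - 1) = m x ^ ((r - 1) / r) := by
      nth_rewrite 1 [← Real.rpow_one (m x)]
      rw [← Real.rpow_add hmx]
      norm_num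
    have husq : |u' x| ^ (r' - 2) * u' x * u' x = |u' x| ^ r' := signedPow_sq r' (u' x) hr'0
    rw [hm'eq x hx]
    have hterm : u' x * (-(h₀ / ν) * (|u' x| ^ (r' - 2) * u' x) * m x * ((r - 1) / r)
        * m x ^ ((r - 1) / r - 1))
        = -(h₀ / ν) * ((r - 1) / r) * (|u' x| ^ r' * m x ^ ((r - 1) / r)) := by
      rw [← husq, ← hmA]; ring
    rw [hterm]
    have hν' : ν * (h₀ / ν) = h₀ := by field_simp
    have hf := hHJB x hx
    calc ν * (ν * r / h₀) ^ (r - 1) * (-(k ^ (r - 1)) * (u'' x * m x ^ ((r - 1) / r)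
          + -(h₀ / ν) * ((r - 1) / r) * (|u' x| ^ r' * m x ^ ((r - 1) / r))))
        = ((ν * r / h₀) ^ (r - 1) * k ^ (r - 1)) * (-(ν * (u'' x * m x ^ ((r - 1) / r)))
            + (ν * (h₀ / ν)) * (((r - 1) / r) * (|u' x| ^ r' * m x ^ ((r - 1) / r)))) := by
          ring
      _ = -(ν * (u'' x * m x ^ ((r - 1) / r)))
            + h₀ * (((r - 1) / r) * (|u' x| ^ r' * m x ^ ((r - 1) / r))) := by
          rw [hμC, hν']; ring
      _ = (-ν * u'' x + (h₀ / r') * |u' x| ^ r') * m x ^ ((r - 1) / r) := by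
          rw [hrinv]; ring
      _ = (f x (m x) - lam) * m x ^ ((r - 1) / r) := by rw [← hf]; ring
end

section
/- Let d ≥ 1, let Ω ⊆ ℝ^d be open, let r, r' > 1 be conjugate exponents, let ν, h₀ > 0, let m : Ω → ℝ be C¹ with m(x) > 0 for all x, and let u : Ω → ℝ be differentiable. Assume that for every x ∈ Ω: ν ∇m(x) + h₀ m(x) |∇u(x)|^{r'-2} ∇u(x) = 0. Define φ := m^{1/r}. Then φ is C¹ on Ω and for every x ∈ Ω: ν r ∇φ(x) = -h₀ φ(x) |∇u(x)|^{r'-2} ∇u(x), and moreover |∇φ(x)|^{r-2} ∇φ(x) = -(h₀/(ν r))^{r-1} φ(x)^{r-1} ∇u(x). -/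
open InnerProductSpace in
/-- (Core of the generalized Hopf–Cole transformation.)
Let `d ≥ 1`, `Ω ⊆ ℝ^d` open, `r, r' > 1` conjugate exponents, `ν, h₀ > 0`, `m` `C¹` and
positive on `Ω`, `u` differentiable on `Ω`, with `ν ∇m + h₀ m |∇u|^{r'-2} ∇u = 0` on `Ω`.
With `φ := m^{1/r}`: `φ` is `C¹` on `Ω`, `ν r ∇φ = -h₀ φ |∇u|^{r'-2} ∇u` on `Ω`, and
`|∇φ|^{r-2} ∇φ = -(h₀/(νr))^{r-1} φ^{r-1} ∇u` on `Ω`. -/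
theorem hopf_cole_gradient_relations (d : ℕ) (hd : 1 ≤ d)
    (Ω : Set (EuclideanSpace ℝ (Fin d))) (hΩ : IsOpen Ω)
    (r r' ν h₀ : ℝ) (hr : 1 < r) (hr' : 1 < r') (hconj : 1 / r + 1 / r' = 1)
    (hν : 0 < ν) (hh₀ : 0 < h₀)
    (m u : EuclideanSpace ℝ (Fin d) → ℝ)
    (hm : ContDiffOn ℝ 1 m Ω) (hmpos : ∀ x ∈ Ω, 0 < m x)
    (hu : DifferentiableOn ℝ u Ω)
    (hflux : ∀ x ∈ Ω,
      ν • gradient m x + (h₀ * m x * ‖gradient u x‖ ^ (r' - 2)) • gradient u x = 0) :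
    ContDiffOn ℝ 1 (fun x => m x ^ (1 / r)) Ω ∧
    (∀ x ∈ Ω,
      (ν * r) • gradient (fun y => m y ^ (1 / r)) x
        = -((h₀ * m x ^ (1 / r) * ‖gradient u x‖ ^ (r' - 2)) • gradient u x)) ∧
    (∀ x ∈ Ω,
      ‖gradient (fun y => m y ^ (1 / r)) x‖ ^ (r - 2) • gradient (fun y => m y ^ (1 / r)) x
        = -(((h₀ / (ν * r)) ^ (r - 1) * (m x ^ (1 / r)) ^ (r - 1)) • gradient u x)) := by
  have hrpos : (0:ℝ) < r := lt_trans one_pos hr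
  have hrne : r ≠ 0 := ne_of_gt hrpos
  have hνne : ν ≠ 0 := ne_of_gt hν
  set c : ℝ := 1 / r with hc
  have hgradφ : ∀ x ∈ Ω,
      gradient (fun y => m y ^ c) x = (c * m x ^ (c - 1)) • gradient m x := by
    intro x hx
    have hmd : DifferentiableAt ℝ m x :=
      (hm.contDiffAt (hΩ.mem_nhds hx)).differentiableAt one_ne_zero
    have h2 := hmd.hasFDerivAt.rpow_const (p := c) (Or.inl (ne_of_gt (hmpos x hx)))
    have h3 : HasGradientAt (fun y => m y ^ c) ((c * m x ^ (c - 1)) • gradient m x) x := by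
      rw [hasGradientAt_iff_hasFDerivAt]
      have h6 : toDual ℝ (EuclideanSpace ℝ (Fin d)) ((c * m x ^ (c - 1)) • gradient m x)
          = (c * m x ^ (c - 1)) • fderiv ℝ m x := by
        rw [map_smul]
        congr 1
        exact (toDual ℝ (EuclideanSpace ℝ (Fin d))).apply_symm_apply (fderiv ℝ m x)
      rw [h6]
      exact h2
    exact h3.gradient
  refine ⟨hm.rpow_const_of_ne (fun x hx => ne_of_gt (hmpos x hx)), ?_, ?_⟩
  · intro x hx
    have hm0 := hmpos x hx
    have hνm : ν • gradient m x
        = -((h₀ * m x * ‖gradient u x‖ ^ (r' - 2)) • gradient u x) := by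
      rw [eq_neg_iff_add_eq_zero]; exact hflux x hx
    have hmx : m x ^ (c - 1) * m x = m x ^ c := by
      rw [Real.rpow_sub_one (ne_of_gt hm0)]
      field_simp
    rw [hgradφ x hx, smul_smul]
    have h1 : ν * r * (c * m x ^ (c - 1)) = m x ^ (c - 1) * ν := by
      rw [hc]; field_simp
    rw [h1, ← smul_smul, hνm, smul_neg, smul_smul]
    congr 2
    rw [← hmx]; ring
  · intro x hx
    have hm0 := hmpos x hx
    have hφ := hgradφ x hx
    have hνm : ν • gradient m x
        = -((h₀ * m x * ‖gradient u x‖ ^ (r' - 2)) • gradient u x) := by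
      rw [eq_neg_iff_add_eq_zero]; exact hflux x hx
    by_cases hg : gradient u x = 0
    · have h0 : gradient m x = 0 := by
        rw [hg, smul_zero, neg_zero, smul_eq_zero] at hνm
        exact hνm.resolve_left hνne
      rw [hφ, h0, smul_zero, smul_zero, hg, smul_zero, neg_zero]
    · set t : ℝ := ‖gradient u x‖ with ht
      have htpos : 0 < t := norm_pos_iff.mpr hg
      set a : ℝ := h₀ / (ν * r) * m x ^ c with ha
      have hapos : 0 < a := by positivity
      have hmx : m x ^ (c - 1) * m x = m x ^ c := by
        rw [Real.rpow_sub_one (ne_of_gt hm0)]; field_simp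
      have hgradm : gradient m x = -((h₀ / ν * m x * t ^ (r' - 2)) • gradient u x) := by
        have h4 : gradient m x = (ν⁻¹) • (ν • gradient m x) := by
          rw [smul_smul, inv_mul_cancel₀ hνne, one_smul]
        rw [h4, hνm, smul_neg, smul_smul]
        congr 2
        field_simp
      have hφ2 : gradient (fun y => m y ^ c) x = -((a * t ^ (r' - 2)) • gradient u x) := by
        rw [hφ, hgradm, smul_neg, smul_smul]
        congr 2
        rw [ha, hc, ← hmx]
        ring
      have hat : 0 < a * t ^ (r' - 2) := by positivity
      have hnorm : ‖gradient (fun y => m y ^ c) x‖ = a * t ^ (r' - 1) := by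
        rw [hφ2, norm_neg, norm_smul, Real.norm_eq_abs, abs_of_pos hat, ← ht,
          mul_assoc, ← Real.rpow_add_one (ne_of_gt htpos)]
        congr 2
        ring
      rw [hnorm, hφ2, smul_neg, smul_smul]
      congr 2
      have hrr' : r + r' = r * r' := by
        rw [hc] at hconj
        field_simp at hconj; linarith
      have hexp : (r' - 1) * (r - 2) + (r' - 2) = 0 := by nlinarith
      have hL : (a * t ^ (r' - 1)) ^ (r - 2) * (a * t ^ (r' - 2)) = a ^ (r - 1) := by
        rw [Real.mul_rpow hapos.le (Real.rpow_nonneg htpos.le _),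
          ← Real.rpow_mul htpos.le]
        have h5 : a ^ (r - 2) * t ^ ((r' - 1) * (r - 2)) * (a * t ^ (r' - 2))
            = a ^ (r - 2) * a * (t ^ ((r' - 1) * (r - 2)) * t ^ (r' - 2)) := by ring
        rw [h5, ← Real.rpow_add_one (ne_of_gt hapos), ← Real.rpow_add htpos, hexp,
          Real.rpow_zero, mul_one]
        congr 1
        ring
      rw [hL, ha, Real.mul_rpow (by positivity) (Real.rpow_nonneg hm0.le _)]
end
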